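/- arXiv:1901.02870 — 3 statements merged into one kernel-verified Lean document; each statement's English description precedes it below -/
import Mathlib

section
/- Fix an odd prime power q and let k be an algebraic closure of F_q. Let n' ≥ 0 and let λ ∈ k^× satisfy λ^{q^{2n'+1}} = λ^{-1}. Let Q ∈ F_{q²}[x] be the minimal polynomial of λ over F_{q²} and d := deg Q. Then d divides 2n'+1, the polynomial ∏_{j=0}^{2n'}(x − λ^{q^{2j}}) lies in F_{q²}[x] and equals Q^{(2n'+1)/d}, and Q is self-reciprocal, i.e., the set of roots of Q in k is stable under the map x ↦ x^{-q}. -/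
/-- The polynomial obtained by applying `x ↦ x^q` to the coefficients of `f`. -/
noncomputable def frobPoly {F : Type*} [Semiring F] (q : ℕ) (f : Polynomial F) :
    Polynomial F :=
  f.sum fun n a => Polynomial.C (a ^ q) * Polynomial.X ^ n

/-- The reciprocal polynomial `f*(λ) = (f(0)^σ)⁻¹ · λ^(deg f) · f^σ(1/λ)` of a
polynomial over `F_{q²}`, where `σ : x ↦ x^q` is the `q`-power Frobenius. -/
noncomputable def recip2 {F : Type*} [Field F] (q : ℕ) (f : Polynomial F) : Polynomial F :=
  Polynomial.C ((f.coeff 0 ^ q)⁻¹) * (frobPoly q f).reverse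

open Polynomial IntermediateField
lemma frobPoly_coeff' {F : Type*} [Semiring F] (q : ℕ) (hq : q ≠ 0) (f : Polynomial F) (n : ℕ) :
    (f.sum fun n a => Polynomial.C (a ^ q) * Polynomial.X ^ n).coeff n = f.coeff n ^ q := by
  rw [Polynomial.sum_def, Polynomial.finset_sum_coeff]
  simp only [Polynomial.coeff_C_mul, Polynomial.coeff_X_pow, mul_ite, mul_one, mul_zero]
  rw [Finset.sum_ite_eq f.support n (fun i => f.coeff i ^ q)]
  by_cases h : n ∈ f.support
  · simp [h]
  · simp only [h, if_false]
    rw [Polynomial.notMem_support_iff.mp h, zero_pow hq]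

lemma prod_shift_one {M : Type*} [CommMonoidWithZero M] [IsCancelMulZero M]
    (g : ℕ → M) (d : ℕ) (h0 : g 0 ≠ 0) (hd : g d = g 0) :
    ∏ j ∈ Finset.range d, g (j + 1) = ∏ j ∈ Finset.range d, g j := by
  apply mul_right_cancel₀ h0
  calc (∏ j ∈ Finset.range d, g (j + 1)) * g 0
      = ∏ j ∈ Finset.range (d + 1), g j := (Finset.prod_range_succ' g d).symm
    _ = (∏ j ∈ Finset.range d, g j) * g d := Finset.prod_range_succ g d
    _ = (∏ j ∈ Finset.range d, g j) * g 0 := by rw [hd]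

lemma prod_shift {M : Type*} [CommMonoidWithZero M] [IsCancelMulZero M]
    (g : ℕ → M) (d c : ℕ) (h0 : ∀ j, g j ≠ 0) (hper : ∀ j, g (j + d) = g j) :
    ∏ j ∈ Finset.range d, g (j + c) = ∏ j ∈ Finset.range d, g j := by
  induction c with
  | zero => simp
  | succ c ih =>
    have h0' : g (0 + c) ≠ 0 := h0 _
    have := prod_shift_one (fun j => g (j + c)) d h0' (by
      show g (d + c) = g (0 + c)
      rw [Nat.zero_add, Nat.add_comm d c, hper c])
    simp only [← Nat.add_assoc, Nat.add_right_comm _ c 1]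
    rw [this, ih]

lemma prod_periodic_pow {M : Type*} [CommMonoid M]
    (g : ℕ → M) (d t : ℕ) (hper : ∀ j, g (j + d) = g j) :
    ∏ j ∈ Finset.range (d * t), g j = (∏ j ∈ Finset.range d, g j) ^ t := by
  induction t with
  | zero => simp
  | succ t ih =>
    have hmul : ∀ s j, g (j + d * s) = g j := by
      intro s
      induction s with
      | zero => simp
      | succ s ihs => intro j; rw [Nat.mul_succ, ← Nat.add_assoc, hper, ihs]
    rw [Nat.mul_succ, Finset.prod_range_add, ih, pow_succ]
    congr 1
    calc ∏ j ∈ Finset.range d, g (d * t + j)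
        = ∏ j ∈ Finset.range d, g j := by
          refine Finset.prod_congr rfl fun j _ => ?_
          rw [Nat.add_comm, hmul t j]

lemma pow_card_mem_range {F k : Type*} [Field F] [Fintype F] [Field k] [Algebra F k]
    (x : k) (hx : x ^ Fintype.card F = x) : ∃ a : F, algebraMap F k a = x := by
  classical
  set φ := algebraMap F k
  set pp : F[X] := X ^ Fintype.card F - X with hpp
  have h1 : 1 < Fintype.card F := Fintype.one_lt_card
  have hpp0 : pp ≠ 0 := FiniteField.X_pow_card_sub_X_ne_zero F h1
  have hroots : pp.roots = Finset.univ.val := FiniteField.roots_X_pow_card_sub_X F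
  have hdeg : pp.natDegree = Fintype.card F := FiniteField.X_pow_card_sub_X_natDegree_eq F h1
  have hs : pp.Splits := by
    rw [Polynomial.splits_iff_card_roots, hroots, hdeg]
    simp [Finset.card_univ]
  have hmap : (pp.map φ).roots = pp.roots.map φ := hs.roots_map φ
  have hx' : x ∈ (pp.map φ).roots := by
    rw [Polynomial.mem_roots']
    refine ⟨Polynomial.map_ne_zero hpp0, ?_⟩
    simp only [hpp, Polynomial.IsRoot, Polynomial.map_sub, Polynomial.map_pow,
      Polynomial.map_X, Polynomial.eval_sub, Polynomial.eval_pow, Polynomial.eval_X]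
    rw [hx, sub_self]
  rw [hmap, hroots] at hx'
  obtain ⟨a, _, ha⟩ := Multiset.mem_map.mp hx'
  exact ⟨a, ha⟩

lemma reverse_map' {F k : Type*} [Field F] [Field k] (φ : F →+* k) (f : F[X]) :
    (f.map φ).reverse = f.reverse.map φ := by
  unfold Polynomial.reverse
  rw [Polynomial.natDegree_map, Polynomial.reflect_map]

lemma reverse_X_sub_C' {k : Type*} [Field k] (b : k) :
    (Polynomial.X - Polynomial.C b).reverse = 1 - Polynomial.C b * Polynomial.X := by
  unfold Polynomial.reverse
  rw [Polynomial.natDegree_X_sub_C, Polynomial.reflect_sub, Polynomial.reflect_one_X,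
    Polynomial.reflect_C, pow_one]

/-- Fix an odd prime power `q` and `k` an algebraic closure of
`F_{q²}`.  Let `n' ≥ 0` and `λ ∈ k^×` with `λ^{q^{2n'+1}} = λ⁻¹`.  Let `Q` be the
minimal polynomial of `λ` over `F_{q²}` and `d = deg Q`.  Then `d ∣ 2n'+1`, the
polynomial `∏_{j<2n'+1} (x - λ^{q^{2j}})` lies in `F_{q²}[x]` and equals
`Q^{(2n'+1)/d}`, and `Q` is self-reciprocal. -/
theorem stmt14 (q : ℕ) (hq : ∃ p m : ℕ, p.Prime ∧ 0 < m ∧ q = p ^ m) (hodd : Odd q)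
    {F : Type*} [Field F] [Fintype F] (hcard : Fintype.card F = q ^ 2)
    (k : Type*) [Field k] [Algebra F k] [IsAlgClosure F k]
    (n' : ℕ) (lam : k) (hlam0 : lam ≠ 0)
    (hlam : lam ^ q ^ (2 * n' + 1) = lam⁻¹)
    (Q : Polynomial F) (hQ : Q = minpoly F lam)
    (d : ℕ) (hd : d = Q.natDegree) :
    d ∣ 2 * n' + 1 ∧
    (∏ j ∈ Finset.range (2 * n' + 1), (Polynomial.X - Polynomial.C (lam ^ q ^ (2 * j)))) =
      (Q.map (algebraMap F k)) ^ ((2 * n' + 1) / d) ∧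
    recip2 q Q = Q := by

  classical
  obtain ⟨p, m, hp, hm, hqpm⟩ := hq
  have hq1 : 1 < q := by
    subst hqpm; exact Nat.one_lt_pow (by omega) hp.one_lt
  have hq0 : q ≠ 0 := by omega
  set M := 2 * n' + 1 with hMdef
  set r := q ^ 2 with hrdef
  have hr1 : 1 < r := Nat.one_lt_pow two_ne_zero hq1
  have hq2j : ∀ j : ℕ, q ^ (2 * j) = r ^ j := fun j => by rw [hrdef, ← pow_mul]
  have hr_eq : r = p ^ (2 * m) := by
    rw [hrdef, hqpm, ← pow_mul, mul_comm]
  -- characteristic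
  obtain ⟨s, hcp, hs⟩ := FiniteField.card F (ringChar F)
  have hpc : p = ringChar F := by
    have h1 : p ∣ ringChar F ^ (s : ℕ) := by
      rw [← hs, hcard, hrdef, hqpm, ← pow_mul]
      exact dvd_pow_self p (by positivity)
    exact (Nat.prime_dvd_prime_iff_eq hp hcp).mp (hp.dvd_of_dvd_pow h1)
  haveI hcharF : CharP F p := by rw [hpc]; exact ringChar.charP F
  haveI hchark : CharP k p := charP_of_injective_algebraMap (algebraMap F k).injective p
  haveI : ExpChar k p := ExpChar.prime hp
  set φ := algebraMap F k with hφdef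
  have hφ : Function.Injective φ := φ.injective
  have hint : IsIntegral F lam := (Algebra.IsAlgebraic.isAlgebraic (R := F) lam).isIntegral
  have hd_pos : 0 < d := by rw [hd, hQ]; exact minpoly.natDegree_pos hint
  -- step 0 : lam ^ r ^ M = lam
  have hM_fix : lam ^ r ^ M = lam := by
    have h1 : r ^ M = q ^ M * q ^ M := by
      rw [hrdef, ← pow_mul, two_mul, pow_add]
    calc lam ^ r ^ M = (lam ^ q ^ M) ^ q ^ M := by rw [h1, pow_mul]
      _ = (lam⁻¹) ^ q ^ M := by rw [hlam]
      _ = (lam ^ q ^ M)⁻¹ := by rw [inv_pow]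
      _ = (lam⁻¹)⁻¹ := by rw [hlam]
      _ = lam := inv_inv lam
  -- step 1 : lam ^ r ^ d = lam  (via the subfield F(lam))
  have hfixd : lam ^ r ^ d = lam := by
    haveI := IntermediateField.adjoin.finiteDimensional hint
    haveI : Finite F⟮lam⟯ := Module.finite_of_finite F
    haveI : Fintype F⟮lam⟯ := Fintype.ofFinite _
    have hcK : Fintype.card F⟮lam⟯ = r ^ d := by
      rw [Module.card_eq_pow_finrank (K := F) (V := F⟮lam⟯), IntermediateField.adjoin.finrank hint,
        hcard, hd, hQ]
    have hgen := FiniteField.pow_card (IntermediateField.AdjoinSimple.gen F lam)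
    rw [hcK] at hgen
    have := congrArg (algebraMap F⟮lam⟯ k) hgen
    rwa [map_pow, IntermediateField.AdjoinSimple.algebraMap_gen] at this
  -- multiplicative order bookkeeping
  have hrd1 : 1 < r ^ d := Nat.one_lt_pow hd_pos.ne' hr1
  have hfin : IsOfFinOrder lam := by
    refine isOfFinOrder_iff_pow_eq_one.mpr ⟨r ^ d - 1, by omega, ?_⟩
    have h1 : lam ^ (r ^ d - 1) * lam = lam := by
      rw [← pow_succ]
      have h2 : r ^ d - 1 + 1 = r ^ d := by omega
      rw [h2, hfixd]
    have h3 : lam ^ (r ^ d - 1) * lam = 1 * lam := by rw [h1, one_mul]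
    exact mul_right_cancel₀ hlam0 h3
  set N := orderOf lam with hN
  have hN0 : 0 < N := hfin.orderOf_pos
  haveI : NeZero N := ⟨hN0.ne'⟩
  have hiff' : ∀ mm : ℕ, lam ^ r ^ mm = lam ↔ ((r : ZMod N)) ^ mm = 1 := by
    intro mm
    have hpow1 : 0 < r ^ mm := pow_pos (by omega) mm
    have e1 : lam ^ r ^ mm = lam ^ (r ^ mm - 1) * lam := by
      rw [← pow_succ]
      congr 1
      omega
    have step1 : lam ^ r ^ mm = lam ↔ lam ^ (r ^ mm - 1) = 1 := by
      constructor
      · intro hfx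
        have : lam ^ (r ^ mm - 1) * lam = 1 * lam := by rw [← e1, hfx, one_mul]
        exact mul_right_cancel₀ hlam0 this
      · intro h1
        rw [e1, h1, one_mul]
    have step2 : lam ^ (r ^ mm - 1) = 1 ↔ N ∣ r ^ mm - 1 :=
      (orderOf_dvd_iff_pow_eq_one).symm
    have step3 : (N ∣ r ^ mm - 1) ↔ ((r : ZMod N)) ^ mm = 1 := by
      have hc : ((r : ZMod N)) ^ mm = ((r ^ mm - 1 : ℕ) : ZMod N) + 1 := by
        have h2 : (r ^ mm - 1) + 1 = r ^ mm := by omega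
        calc ((r : ZMod N)) ^ mm = ((r ^ mm : ℕ) : ZMod N) := by push_cast; ring
          _ = (((r ^ mm - 1) + 1 : ℕ) : ZMod N) := by rw [h2]
          _ = ((r ^ mm - 1 : ℕ) : ZMod N) + 1 := by push_cast; ring
      rw [hc]
      constructor
      · intro hdvd
        rw [(ZMod.natCast_eq_zero_iff _ _).mpr hdvd, zero_add]
      · intro heq
        have h0 : ((r ^ mm - 1 : ℕ) : ZMod N) + 1 = 0 + 1 := by rw [heq, zero_add]
        exact (ZMod.natCast_eq_zero_iff _ _).mp (add_right_cancel h0)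
    exact step1.trans (step2.trans step3)
  set e := orderOf ((r : ZMod N)) with he
  have hfine : IsOfFinOrder ((r : ZMod N)) :=
    isOfFinOrder_iff_pow_eq_one.mpr ⟨d, hd_pos, (hiff' d).mp hfixd⟩
  have he_pos : 0 < e := hfine.orderOf_pos
  have hiff : ∀ mm : ℕ, lam ^ r ^ mm = lam ↔ e ∣ mm := fun mm =>
    (hiff' mm).trans (orderOf_dvd_iff_pow_eq_one).symm
  -- key lifting lemma
  have key : ∀ mm : ℕ, 0 < mm → lam ^ r ^ mm = lam →
      ∃ R : Polynomial F, R.Monic ∧ R.natDegree = mm ∧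
        R.map φ = ∏ j ∈ Finset.range mm, (X - C (lam ^ r ^ j)) ∧
        Polynomial.aeval lam R = 0 := by
    intro mm hmm hfixmm
    set P : Polynomial k := ∏ j ∈ Finset.range mm, (X - C (lam ^ r ^ j)) with hPdef
    have hPmonic : P.Monic := monic_prod_of_monic _ _ fun j _ => monic_X_sub_C _
    have hmapP : P.map (iterateFrobenius k p (2 * m)) = P := by
      rw [hPdef, Polynomial.map_prod]
      have step : ∀ j, (X - C (lam ^ r ^ j)).map (iterateFrobenius k p (2 * m)) =
          X - C (lam ^ r ^ (j + 1)) := by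
        intro j
        rw [Polynomial.map_sub, Polynomial.map_X, Polynomial.map_C, iterateFrobenius_def,
          ← pow_mul, ← hr_eq, ← pow_succ]
      rw [Finset.prod_congr rfl (fun j _ => step j)]
      refine prod_shift_one (fun j => X - C (lam ^ r ^ j)) mm (X_sub_C_ne_zero _) ?_
      show (X - C (lam ^ r ^ mm) : Polynomial k) = X - C (lam ^ r ^ 0)
      rw [hfixmm, pow_zero, pow_one]
    have hcoeff : ∀ n, (P.coeff n) ^ Fintype.card F = P.coeff n := by
      intro n
      have h1 := congrArg (fun g => Polynomial.coeff g n) hmapP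
      simp only [Polynomial.coeff_map, iterateFrobenius_def] at h1
      rwa [hcard, hr_eq]
    have hlift : P ∈ Polynomial.lifts φ := by
      rw [Polynomial.lifts_iff_coeff_lifts]
      intro n
      obtain ⟨a, ha⟩ := pow_card_mem_range (P.coeff n) (hcoeff n)
      exact ⟨a, ha⟩
    obtain ⟨R, hRmap, hRdeg, hRmonic⟩ := Polynomial.lifts_and_degree_eq_and_monic hlift hPmonic
    have hPnd : P.natDegree = mm := by
      rw [hPdef, Polynomial.natDegree_prod_of_monic _ _ (fun j _ => monic_X_sub_C _)]
      have hone : ∀ x ∈ Finset.range mm, (X - C (lam ^ r ^ x) : Polynomial k).natDegree = 1 :=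
        fun x _ => Polynomial.natDegree_X_sub_C _
      rw [Finset.sum_congr rfl hone, Finset.sum_const, smul_eq_mul, mul_one, Finset.card_range]
    have hRnd : R.natDegree = mm := by
      have h1 : (R.map φ).natDegree = R.natDegree := Polynomial.natDegree_map _
      rw [hRmap, hPnd] at h1
      omega
    have hRaeval : Polynomial.aeval lam R = 0 := by
      rw [Polynomial.aeval_def, ← Polynomial.eval_map, hRmap, hPdef, Polynomial.eval_prod]
      apply Finset.prod_eq_zero (Finset.mem_range.mpr hmm)
      simp
    exact ⟨R, hRmonic, hRnd, hRmap, hRaeval⟩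
  have hdm : ∀ mm : ℕ, 0 < mm → lam ^ r ^ mm = lam → d ≤ mm := by
    intro mm hmm hfx
    obtain ⟨R, hmon, hnd, hmap, hae⟩ := key mm hmm hfx
    have hdvd : Q ∣ R := hQ ▸ minpoly.dvd F lam hae
    calc d = Q.natDegree := hd
      _ ≤ R.natDegree := Polynomial.natDegree_le_of_dvd hdvd hmon.ne_zero
      _ = mm := hnd
  have hde : d = e :=
    le_antisymm (hdm e he_pos ((hiff e).mpr dvd_rfl)) (Nat.le_of_dvd hd_pos ((hiff d).mp hfixd))
  have hdM : d ∣ M := by rw [hde]; exact (hiff M).mp hM_fix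
  -- Q.map φ is the product over a full period
  have hQmap : Q.map φ = ∏ j ∈ Finset.range d, (X - C (lam ^ r ^ j)) := by
    obtain ⟨R, hmon, hnd, hmap, hae⟩ := key d hd_pos hfixd
    have hdvd : Q ∣ R := hQ ▸ minpoly.dvd F lam hae
    have hQmon : Q.Monic := hQ ▸ minpoly.monic hint
    have hQR : Q = R := by
      obtain ⟨u, hu⟩ := hdvd
      have hu0 : u ≠ 0 := by
        rintro rfl
        rw [mul_zero] at hu
        exact hmon.ne_zero hu
      have hdeg : R.natDegree = Q.natDegree + u.natDegree := by
        rw [hu, Polynomial.natDegree_mul hQmon.ne_zero hu0]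
      have hund : u.natDegree = 0 := by omega
      have hueq : u = C (u.coeff 0) := Polynomial.eq_C_of_natDegree_eq_zero hund
      have hlead : (1 : F) = u.coeff 0 := by
        have h2 : R.leadingCoeff = Q.leadingCoeff * u.leadingCoeff := by
          rw [hu, Polynomial.leadingCoeff_mul]
        rw [hmon.leadingCoeff, hQmon.leadingCoeff, one_mul] at h2
        rwa [Polynomial.leadingCoeff, hund] at h2
      rw [hu, hueq, ← hlead, Polynomial.C_1, mul_one]
    rw [hQR, hmap]
  -- periodicity
  have hper : ∀ j, lam ^ r ^ (j + d) = lam ^ r ^ j := by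
    intro j
    rw [pow_add, mul_comm, pow_mul, hfixd]
  have hperh : ∀ j, (X - C (lam ^ r ^ (j + d)) : Polynomial k) = X - C (lam ^ r ^ j) := by
    intro j; rw [hper j]
  -- part 2
  have hpart2 : (∏ j ∈ Finset.range M, (X - C (lam ^ q ^ (2 * j)) : Polynomial k)) =
      (Q.map φ) ^ (M / d) := by
    have h1 : (∏ j ∈ Finset.range M, (X - C (lam ^ q ^ (2 * j)) : Polynomial k)) =
        ∏ j ∈ Finset.range M, (X - C (lam ^ r ^ j)) := by
      refine Finset.prod_congr rfl fun j _ => ?_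
      rw [hq2j]
    have hM_eq : d * (M / d) = M := Nat.mul_div_cancel' hdM
    rw [h1, hQmap]
    calc ∏ j ∈ Finset.range M, (X - C (lam ^ r ^ j) : Polynomial k)
        = ∏ j ∈ Finset.range (d * (M / d)), (X - C (lam ^ r ^ j)) := by rw [hM_eq]
      _ = (∏ j ∈ Finset.range d, (X - C (lam ^ r ^ j))) ^ (M / d) :=
          prod_periodic_pow (fun j => X - C (lam ^ r ^ j)) d (M / d) hperh
  -- part 3
  have hSig : ∀ g : Polynomial k, frobPoly q g = g.map (iterateFrobenius k p m) := by
    intro g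
    ext n
    rw [frobPoly, frobPoly_coeff' q hq0, Polynomial.coeff_map, iterateFrobenius_def, hqpm]
  have hmapfrob : (frobPoly q Q).map φ = frobPoly q (Q.map φ) := by
    ext n
    rw [frobPoly, frobPoly, Polynomial.coeff_map, frobPoly_coeff' q hq0,
      frobPoly_coeff' q hq0, Polynomial.coeff_map, map_pow]
  set b : ℕ → k := fun j => (lam ^ r ^ j) ^ q with hbdef
  have hb0 : ∀ j, b j ≠ 0 := fun j => pow_ne_zero _ (pow_ne_zero _ hlam0)
  have hbinv : ∀ j, (b j)⁻¹ = lam ^ r ^ (j + (n' + 1)) := by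
    intro j
    have e1 : q ^ M * (q ^ (2 * j) * q) = q ^ (2 * (j + (n' + 1))) := by
      rw [← pow_succ q (2 * j), ← pow_add]
      congr 1
      rw [hMdef]
      omega
    calc (b j)⁻¹ = ((lam ^ r ^ j) ^ q)⁻¹ := rfl
      _ = (lam ^ (r ^ j * q))⁻¹ := by rw [pow_mul]
      _ = (lam ^ (q ^ (2 * j) * q))⁻¹ := by rw [hq2j]
      _ = (lam⁻¹) ^ (q ^ (2 * j) * q) := by rw [inv_pow]
      _ = (lam ^ q ^ M) ^ (q ^ (2 * j) * q) := by rw [hlam]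
      _ = lam ^ (q ^ M * (q ^ (2 * j) * q)) := by rw [← pow_mul]
      _ = lam ^ q ^ (2 * (j + (n' + 1))) := by rw [e1]
      _ = lam ^ r ^ (j + (n' + 1)) := by rw [hq2j]
  have hfrobP : frobPoly q (Q.map φ) = ∏ j ∈ Finset.range d, (X - C (b j)) := by
    rw [hSig, hQmap, Polynomial.map_prod]
    refine Finset.prod_congr rfl fun j _ => ?_
    rw [Polynomial.map_sub, Polynomial.map_X, Polynomial.map_C, iterateFrobenius_def, ← hqpm]
  have hrevprod : ∀ (s : Finset ℕ) (f : ℕ → Polynomial k),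
      (∏ j ∈ s, f j).reverse = ∏ j ∈ s, (f j).reverse := by
    intro s f
    induction s using Finset.cons_induction with
    | empty => simpa using Polynomial.reverse_C (1 : k)
    | cons a s ha ih =>
      rw [Finset.prod_cons, Finset.prod_cons, Polynomial.reverse_mul_of_domain, ih]
  have hc0 : φ (Q.coeff 0) = ∏ j ∈ Finset.range d, (-(lam ^ r ^ j)) := by
    have h1 : φ (Q.coeff 0) = (Q.map φ).coeff 0 := (Polynomial.coeff_map φ 0).symm
    rw [h1, Polynomial.coeff_zero_eq_eval_zero, hQmap, Polynomial.eval_prod]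
    refine Finset.prod_congr rfl fun j _ => ?_
    simp
  have hprodb0 : (∏ j ∈ Finset.range d, (-(b j))) ≠ 0 :=
    Finset.prod_ne_zero_iff.mpr fun j _ => neg_ne_zero.mpr (hb0 j)
  have hgoal3 : (recip2 q Q).map φ = Q.map φ := by
    rw [recip2, Polynomial.map_mul, Polynomial.map_C, ← reverse_map', hmapfrob, hfrobP,
      hrevprod]
    have hfac : ∀ j ∈ Finset.range d, (X - C (b j) : Polynomial k).reverse =
        (-C (b j)) * (X - C ((b j)⁻¹)) := by
      intro j _
      have hcc : (C (b j) : Polynomial k) * C ((b j)⁻¹) = 1 := by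
        rw [← Polynomial.C_mul, mul_inv_cancel₀ (hb0 j), Polynomial.C_1]
      rw [reverse_X_sub_C', neg_mul, mul_sub, hcc, neg_sub]
    rw [Finset.prod_congr rfl hfac, Finset.prod_mul_distrib]
    have hCprod : (∏ j ∈ Finset.range d, (-C (b j) : Polynomial k)) =
        C (∏ j ∈ Finset.range d, (-(b j))) := by
      rw [map_prod]
      exact Finset.prod_congr rfl fun j _ => by rw [map_neg]
    have hscal : φ ((Q.coeff 0 ^ q)⁻¹) = (∏ j ∈ Finset.range d, (-(b j)))⁻¹ := by
      rw [map_inv₀, map_pow, hc0, ← Finset.prod_pow]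
      congr 1
      refine Finset.prod_congr rfl fun j _ => ?_
      rw [hodd.neg_pow, hbdef]
    rw [hscal, hCprod, ← mul_assoc, ← Polynomial.C_mul, inv_mul_cancel₀ hprodb0,
      Polynomial.C_1, one_mul]
    have hshift : (∏ j ∈ Finset.range d, (X - C ((b j)⁻¹) : Polynomial k)) =
        ∏ j ∈ Finset.range d, (X - C (lam ^ r ^ j)) := by
      have h1 : ∀ j ∈ Finset.range d, (X - C ((b j)⁻¹) : Polynomial k) =
          X - C (lam ^ r ^ (j + (n' + 1))) := fun j _ => by rw [hbinv]
      rw [Finset.prod_congr rfl h1]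
      exact prod_shift (fun j => X - C (lam ^ r ^ j)) d (n' + 1)
        (fun j => X_sub_C_ne_zero _) hperh
    rw [hshift, hQmap]
  exact ⟨hdM, hpart2, Polynomial.map_injective φ hφ hgoal3⟩
end

section
/- Let p be an odd prime, let W be a finite-dimensional ℚ_p-vector space with a nondegenerate symmetric bilinear form B, and let L ⊂ W be a full-rank ℤ_p-lattice satisfying pL^∨ ⊆ L ⊆ L^∨, where L^∨ := {x ∈ W : B(x, y) ∈ ℤ_p for all y ∈ L}. Let v ∈ L with v ∉ pL and B(v, v) ≠ 0, and suppose the reflection τ_v : W → W, τ_v(x) = x − 2·B(x, v)·B(v, v)^{-1}·v, maps L into L. Then B(x, v) ∈ B(v, v)·ℤ_p for every x ∈ L (equivalently v ∈ B(v, v)·L^∨), and the p-adic valuation of B(v, v) is 0 or 1. -/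
/-- Let `p` be an odd prime, `W` a finite-dimensional
`ℚ_p`-vector space with a nondegenerate symmetric bilinear form `B`, and
`L ⊂ W` a full-rank `ℤ_p`-lattice with `pL^∨ ⊆ L ⊆ L^∨`.  Let `v ∈ L` with
`v ∉ pL` and `B(v,v) ≠ 0`, and suppose the reflection
`τ_v : x ↦ x - 2·B(x,v)·B(v,v)⁻¹·v` maps `L` into `L`.  Then
`B(x,v) ∈ B(v,v)·ℤ_p` for all `x ∈ L`, and the `p`-adic valuation of `B(v,v)`
is `0` or `1`. -/
theorem stmt18 (p : ℕ) [Fact p.Prime] (hp : Odd p)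
    {W : Type*} [AddCommGroup W] [Module ℚ_[p] W] [FiniteDimensional ℚ_[p] W]
    [Module ℤ_[p] W] [IsScalarTower ℤ_[p] ℚ_[p] W]
    (B : LinearMap.BilinForm ℚ_[p] W) (hsymm : ∀ x y : W, B x y = B y x)
    (hnd : B.Nondegenerate)
    (L : Submodule ℤ_[p] W) (hfg : L.FG)
    (hfull : Submodule.span ℚ_[p] (L : Set W) = ⊤)
    (Ldual : Set W)
    (hLdual : Ldual = {x : W | ∀ y ∈ L, ∃ c : ℤ_[p], B x y = (c : ℚ_[p])})
    (hpLd : ∀ x ∈ Ldual, (p : ℚ_[p]) • x ∈ L)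
    (hLLd : (L : Set W) ⊆ Ldual)
    (v : W) (hvL : v ∈ L) (hvp : ¬ ∃ u ∈ L, v = (p : ℚ_[p]) • u)
    (hvv : B v v ≠ 0)
    (hrefl : ∀ x ∈ L, x - (2 * B x v * (B v v)⁻¹) • v ∈ L) :
    (∀ x ∈ L, ∃ c : ℤ_[p], B x v = B v v * (c : ℚ_[p])) ∧
    ((B v v).valuation = 0 ∨ (B v v).valuation = 1) := by
  have hp2 : (2 : ℚ_[p]) ≠ 0 := two_ne_zero
  have hpne : (p : ℚ_[p]) ≠ 0 := by
    exact_mod_cast Nat.cast_ne_zero.mpr (Fact.out : p.Prime).ne_zero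
  -- valuation of inverse
  have hval_inv : ∀ c : ℚ_[p], c ≠ 0 → (c⁻¹).valuation = -c.valuation := by
    intro c hc
    have h1 : (c * c⁻¹).valuation = c.valuation + (c⁻¹).valuation :=
      Padic.valuation_mul hc (inv_ne_zero hc)
    rw [mul_inv_cancel₀ hc, Padic.valuation_one] at h1
    linarith
  -- Key lemma: if c • v ∈ L then ‖c‖ ≤ 1.
  have keyA : ∀ c : ℚ_[p], c • v ∈ L → ‖c‖ ≤ 1 := by
    intro c hc
    by_contra h
    push_neg at h
    have hc0 : c ≠ 0 := by
      rintro rfl; norm_num at h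
    rw [← not_le, Padic.norm_le_one_iff_val_nonneg, not_le] at h
    set t : ℚ_[p] := c⁻¹ * ((p : ℚ_[p]))⁻¹ with ht_def
    have ht0 : t ≠ 0 := mul_ne_zero (inv_ne_zero hc0) (inv_ne_zero hpne)
    have htval : 0 ≤ t.valuation := by
      rw [ht_def, Padic.valuation_mul (inv_ne_zero hc0) (inv_ne_zero hpne),
        hval_inv c hc0, hval_inv _ hpne, Padic.valuation_p]
      omega
    have htnorm : ‖t‖ ≤ 1 := (Padic.norm_le_one_iff_val_nonneg t).mpr htval
    apply hvp
    obtain ⟨T, hTcoe⟩ : ∃ T : ℤ_[p], (T : ℚ_[p]) = t := ⟨⟨t, htnorm⟩, rfl⟩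
    refine ⟨T • (c • v), L.smul_mem _ hc, ?_⟩
    have hsm : T • (c • v) = t • (c • v) := by
      rw [← algebraMap_smul (R := ℤ_[p]) ℚ_[p] T (c • v)]
      rw [show (algebraMap ℤ_[p] ℚ_[p]) T = t from hTcoe]
    rw [hsm, smul_smul, smul_smul]
    rw [show (p : ℚ_[p]) * (c⁻¹ * (p : ℚ_[p])⁻¹) * c = 1 by field_simp, one_smul]
  -- Part 1
  have part1 : ∀ x ∈ L, ∃ c : ℤ_[p], B x v = B v v * (c : ℚ_[p]) := by
    intro x hx
    have h1 : (2 * B x v * (B v v)⁻¹) • v ∈ L := by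
      have := L.sub_mem hx (hrefl x hx)
      simpa using this
    have h2 : ‖2 * B x v * (B v v)⁻¹‖ ≤ 1 := keyA _ h1
    have h3 : ‖(2 : ℚ_[p])‖ = 1 := by
      have := Padic.norm_eq_zpow_neg_valuation (p := p) hp2
      rw [this, show ((2 : ℚ_[p]).valuation) = padicValNat p 2 from
        Padic.valuation_ofNat 2]
      have : padicValNat p 2 = 0 := by
        apply padicValNat.eq_zero_of_not_dvd
        intro hdvd
        have hp2' := (Nat.prime_dvd_prime_iff_eq (Fact.out : p.Prime) Nat.prime_two).mp hdvd
        rcases hp with ⟨k, hk⟩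
        omega
      simp [this]
    have h4 : ‖B x v * (B v v)⁻¹‖ ≤ 1 := by
      have : ‖2 * (B x v * (B v v)⁻¹)‖ ≤ 1 := by
        rw [show (2 : ℚ_[p]) * (B x v * (B v v)⁻¹) = 2 * B x v * (B v v)⁻¹ by ring]
        exact h2
      rwa [norm_mul, h3, one_mul] at this
    refine ⟨⟨B x v * (B v v)⁻¹, h4⟩, ?_⟩
    show B x v = B v v * (B x v * (B v v)⁻¹)
    field_simp
  refine ⟨part1, ?_⟩
  -- valuation ≥ 0 : B v v ∈ ℤ_p
  have hvdual : v ∈ Ldual := hLLd hvL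
  rw [hLdual] at hvdual
  obtain ⟨c0, hc0⟩ := hvdual v hvL
  have hval0 : 0 ≤ (B v v).valuation := by
    rw [← Padic.norm_le_one_iff_val_nonneg, hc0]
    exact c0.norm_le_one
  -- w = (B v v)⁻¹ • v ∈ Ldual
  have hw : ((B v v)⁻¹ • v) ∈ Ldual := by
    rw [hLdual]
    intro y hy
    obtain ⟨c, hc⟩ := part1 y hy
    refine ⟨c, ?_⟩
    rw [map_smul, LinearMap.smul_apply, smul_eq_mul, hsymm v y, hc]
    field_simp
  have hpw : ((p : ℚ_[p]) * (B v v)⁻¹) • v ∈ L := by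
    have := hpLd _ hw
    rwa [smul_smul] at this
  have h5 : ‖(p : ℚ_[p]) * (B v v)⁻¹‖ ≤ 1 := keyA _ hpw
  rw [Padic.norm_le_one_iff_val_nonneg,
    Padic.valuation_mul hpne (inv_ne_zero hvv), Padic.valuation_p,
    hval_inv _ hvv] at h5
  omega
end

section
/- Let p be an odd prime, let W be a finite-dimensional ℚ_p-vector space with a nondegenerate symmetric bilinear form B, and let L ⊂ W be a full-rank ℤ_p-lattice satisfying pL^∨ ⊆ L ⊆ L^∨, where L^∨ := {x ∈ W : B(x, y) ∈ ℤ_p for all y ∈ L}. Let v ∈ L with v ∉ pL and B(v, v) ≠ 0, and suppose the reflection τ_v : x ↦ x − 2·B(x, v)·B(v, v)^{-1}·v maps L into L. If B(v, v) is a p-adic unit, then τ_v(x) − x ∈ L for every x ∈ L^∨, i.e., τ_v induces the identity on the F_p-vector space L^∨/L; and if the p-adic valuation of B(v, v) equals 1, then v ∈ pL^∨. -/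
section aux
variable {p : ℕ} [Fact p.Prime] {W : Type*} [AddCommGroup W] [Module ℚ_[p] W]
  [Module ℤ_[p] W] [IsScalarTower ℤ_[p] ℚ_[p] W]

lemma smul_mem_of_norm_le_one (L : Submodule ℤ_[p] W) {q : ℚ_[p]} (hq : ‖q‖ ≤ 1)
    {x : W} (hx : x ∈ L) : q • x ∈ L := by
  let c : ℤ_[p] := ⟨q, hq⟩
  have hc : (c : ℚ_[p]) = q := rfl
  rw [← hc, ← PadicInt.algebraMap_apply, algebraMap_smul]
  exact L.smul_mem c hx
end aux

/-- Let `p` be an odd prime, `W` a finite-dimensional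
`ℚ_p`-vector space with a nondegenerate symmetric bilinear form `B`, and
`L ⊂ W` a full-rank `ℤ_p`-lattice with `pL^∨ ⊆ L ⊆ L^∨`.  Let `v ∈ L` with
`v ∉ pL` and `B(v,v) ≠ 0`, and suppose the reflection
`τ_v : x ↦ x - 2·B(x,v)·B(v,v)⁻¹·v` maps `L` into `L`.  If `B(v,v)` is a
`p`-adic unit then `τ_v(x) - x ∈ L` for every `x ∈ L^∨` (so `τ_v` induces the
identity on `L^∨/L`); and if the `p`-adic valuation of `B(v,v)` equals `1`,
then `v ∈ p·L^∨`. -/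
theorem stmt19 (p : ℕ) [Fact p.Prime] (hp : Odd p)
    {W : Type*} [AddCommGroup W] [Module ℚ_[p] W] [FiniteDimensional ℚ_[p] W]
    [Module ℤ_[p] W] [IsScalarTower ℤ_[p] ℚ_[p] W]
    (B : LinearMap.BilinForm ℚ_[p] W) (hsymm : ∀ x y : W, B x y = B y x)
    (hnd : B.Nondegenerate)
    (L : Submodule ℤ_[p] W) (hfg : L.FG)
    (hfull : Submodule.span ℚ_[p] (L : Set W) = ⊤)
    (Ldual : Set W)
    (hLdual : Ldual = {x : W | ∀ y ∈ L, ∃ c : ℤ_[p], B x y = (c : ℚ_[p])})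
    (hpLd : ∀ x ∈ Ldual, (p : ℚ_[p]) • x ∈ L)
    (hLLd : (L : Set W) ⊆ Ldual)
    (v : W) (hvL : v ∈ L) (hvp : ¬ ∃ u ∈ L, v = (p : ℚ_[p]) • u)
    (hvv : B v v ≠ 0)
    (hrefl : ∀ x ∈ L, x - (2 * B x v * (B v v)⁻¹) • v ∈ L) :
    (‖B v v‖ = 1 → ∀ x ∈ Ldual, (x - (2 * B x v * (B v v)⁻¹) • v) - x ∈ L) ∧
    ((B v v).valuation = 1 → ∃ w ∈ Ldual, v = (p : ℚ_[p]) • w) := by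
  have hp' : (p : ℕ).Prime := Fact.out
  have hnd2 : ¬ ((p : ℤ) ∣ (2 : ℤ)) := by
    rw [show ((2:ℤ)) = ((2:ℕ):ℤ) by norm_num, Int.natCast_dvd_natCast]
    intro hd
    have := (Nat.prime_dvd_prime_iff_eq hp' Nat.prime_two).mp hd
    rw [this] at hp
    exact (Nat.not_odd_iff_even.mpr even_two) hp
  have h2 : ‖(2 : ℚ_[p])‖ = 1 := by
    have h := Padic.norm_int_le_one (p := p) 2
    have hlt := (Padic.norm_intCast_lt_one_iff (p := p) (k := 2)).not.mpr hnd2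
    have h1 : ‖((2:ℤ) : ℚ_[p])‖ = 1 := le_antisymm h (not_lt.mp hlt)
    simpa using h1
  have hdual_norm : ∀ x ∈ Ldual, ∀ y ∈ L, ‖B x y‖ ≤ 1 := by
    intro x hx y hy
    rw [hLdual] at hx
    obtain ⟨c, hc⟩ := hx y hy
    rw [hc]
    exact c.2
  constructor
  · intro hunit x hx
    have hBxv : ‖B x v‖ ≤ 1 := hdual_norm x hx v hvL
    have hinv : ‖(B v v)⁻¹‖ = 1 := by rw [norm_inv, hunit, inv_one]
    have hs : ‖2 * B x v * (B v v)⁻¹‖ ≤ 1 := by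
      rw [norm_mul, norm_mul, h2, hinv, one_mul, mul_one]; exact hBxv
    have heq : (x - (2 * B x v * (B v v)⁻¹) • v) - x = -((2 * B x v * (B v v)⁻¹) • v) := by
      abel
    rw [heq]
    exact L.neg_mem (smul_mem_of_norm_le_one L hs hvL)
  · intro hval
    have hnvv : ‖B v v‖ = (p : ℝ)⁻¹ := by
      rw [Padic.norm_eq_zpow_neg_valuation hvv, hval]
      simp
    have hppos : (0:ℝ) < p := by exact_mod_cast hp'.pos
    have hp1 : (1:ℝ) < p := by exact_mod_cast hp'.one_lt
    have hpq : (p : ℚ_[p]) ≠ 0 := by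
      exact_mod_cast (Nat.cast_ne_zero (R := ℚ_[p])).mpr hp'.ne_zero
    have key : ∀ x ∈ L, ‖B x v‖ ≤ (p : ℝ)⁻¹ := by
      intro x hx
      by_contra hgt
      push_neg at hgt
      have hle1 : ‖B x v‖ ≤ 1 := hdual_norm x (hLLd hx) v hvL
      have hBxv0 : B x v ≠ 0 := by
        intro h0
        rw [h0, norm_zero] at hgt
        have : (0:ℝ) ≤ (p:ℝ)⁻¹ := by positivity
        linarith
      -- discreteness: ‖B x v‖ = 1
      have hBxv1 : ‖B x v‖ = 1 := by
        rw [Padic.norm_eq_zpow_neg_valuation hBxv0] at hgt hle1 ⊢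
        set k := (B x v).valuation
        have h1 : (p:ℝ) ^ (-k) ≤ (p:ℝ) ^ (0:ℤ) := by simpa using hle1
        have h2' : (p:ℝ) ^ (-1:ℤ) < (p:ℝ) ^ (-k) := by
          rw [zpow_neg_one]; exact hgt
        have hk1 : -k ≤ 0 := (zpow_le_zpow_iff_right₀ hp1).mp h1
        have hk2 : (-1:ℤ) < -k := (zpow_lt_zpow_iff_right₀ hp1).mp h2'
        have : -k = 0 := by omega
        rw [this, zpow_zero]
      set s := 2 * B x v * (B v v)⁻¹ with hs_def
      have hsv : s • v ∈ L := by
        have h1 := hrefl x hx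
        have h3 := L.sub_mem hx h1
        rwa [show x - (x - s • v) = s • v by abel] at h3
      have hs0 : s ≠ 0 :=
        mul_ne_zero (mul_ne_zero two_ne_zero hBxv0) (inv_ne_zero hvv)
      have hns : ‖s‖ = (p:ℝ) := by
        rw [hs_def, norm_mul, norm_mul, h2, one_mul, norm_inv, hnvv, inv_inv, hBxv1, one_mul]
      have hnsinv : ‖s⁻¹ * (p : ℚ_[p])⁻¹‖ ≤ 1 := by
        rw [norm_mul, norm_inv, norm_inv, hns, Padic.norm_p, inv_inv,
          inv_mul_cancel₀ (ne_of_gt hppos)]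
      apply hvp
      refine ⟨(s⁻¹ * (p : ℚ_[p])⁻¹) • (s • v), smul_mem_of_norm_le_one L hnsinv hsv, ?_⟩
      rw [smul_smul, smul_smul]
      have heq1 : (p:ℚ_[p]) * (s⁻¹ * (p : ℚ_[p])⁻¹) * s = 1 := by
        field_simp [mul_comm]
      rw [heq1, one_smul]
    refine ⟨(p : ℚ_[p])⁻¹ • v, ?_, ?_⟩
    · rw [hLdual]
      intro y hy
      have hb : ‖B ((p : ℚ_[p])⁻¹ • v) y‖ ≤ 1 := by
        rw [map_smul, LinearMap.smul_apply, smul_eq_mul, norm_mul, norm_inv,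
          Padic.norm_p, inv_inv]
        rw [hsymm v y]
        calc (p:ℝ) * ‖B y v‖ ≤ (p:ℝ) * (p:ℝ)⁻¹ :=
              mul_le_mul_of_nonneg_left (key y hy) (le_of_lt hppos)
        _ = 1 := mul_inv_cancel₀ (ne_of_gt hppos)
      exact ⟨⟨_, hb⟩, rfl⟩
    · rw [smul_smul, mul_inv_cancel₀ hpq, one_smul]
end
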